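/- Let $Q$ be a finite quiver, $M$ a finite-dimensional complex representation of $Q$ with $M_p = \mathbb{C}^{d_p}$ and structure matrices $A_v = (m_{v,j,i})$ for arrows $v: p \to q$, and $\mathbf{e} = (e_p)$ a dimension vector. A tuple $(N_p)_{p \in Q_0}$ of subspaces $N_p \subseteq \mathbb{C}^{d_p}$ with $\dim N_p = e_p$ defines a subrepresentation of $M$ (i.e. $A_v(N_p) \subseteq N_q$ for all arrows $v: p \to q$) if and only if for every arrow $v: p \to q$, every $(e_p-1)$-subset $I$ of $\{1,\dots,d_p\}$, and every $(e_q+1)$-subset $J$ of $\{1,\dots,d_q\}$, the Plücker coordinates of the $N_p$ satisfy $\sum_{i \notin I, j \in J} (-1)^{\epsilon(i,I)+\epsilon(j,J)} m_{v,j,i} \Delta_{I\cup\{i\}}(N_p) \Delta_{J\setminus\{j\}}(N_q) = 0$. -/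

import Mathlib

open Matrix Finset

def eps {d : ℕ} (i : Fin d) (I : Finset (Fin d)) : ℕ := (I.filter fun i' => i' ≤ i).card

noncomputable def plucker {d e : ℕ} (B : Matrix (Fin d) (Fin e) ℂ) (I : Finset (Fin d)) : ℂ :=
  if h : I.card = e then (B.submatrix (fun k => (I.orderIsoOfFin h k : Fin d)) id).det else 0

/-- The columns of `B` form a basis of the subspace `N` of `ℂ^d`. -/
def IsColBasis {d e : ℕ} (B : Matrix (Fin d) (Fin e) ℂ) (N : Submodule ℂ (Fin d → ℂ)) : Prop :=
  LinearIndependent ℂ (fun l => fun i => B i l) ∧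
    Submodule.span ℂ (Set.range fun l => fun i => B i l) = N

noncomputable def qpr {dp dq ep eq : ℕ} (A : Matrix (Fin dq) (Fin dp) ℂ)
    (Bp : Matrix (Fin dp) (Fin ep) ℂ) (Bq : Matrix (Fin dq) (Fin eq) ℂ)
    (I : Finset (Fin dp)) (J : Finset (Fin dq)) : ℂ :=
  ∑ i ∈ Iᶜ, ∑ j ∈ J,
    (-1 : ℂ) ^ (eps i I + eps j J) * A j i * plucker Bp (insert i I) * plucker Bq (J.erase j)

noncomputable def wvec {d e : ℕ} (B : Matrix (Fin d) (Fin e) ℂ) (I : Finset (Fin d)) :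
    Fin d → ℂ := fun i => (-1 : ℂ) ^ (eps i I) * plucker B (insert i I)

noncomputable def brel {d e : ℕ} (B : Matrix (Fin d) (Fin e) ℂ) (y : Fin d → ℂ)
    (J : Finset (Fin d)) : ℂ :=
  ∑ j ∈ J, (-1 : ℂ) ^ (eps j J) * y j * plucker B (J.erase j)

lemma plucker_eq_det {d e : ℕ} (B : Matrix (Fin d) (Fin e) ℂ) {s : Finset (Fin d)}
    (h : s.card = e) {f : Fin e → Fin d} (hmono : StrictMono f) (hfs : ∀ r, f r ∈ s) :
    plucker B s = (B.submatrix f id).det := by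
  rw [plucker, dif_pos h]
  congr 1
  have := Finset.orderEmbOfFin_unique h hfs hmono
  ext r l
  simp [submatrix_apply, ← this]

lemma eps_orderEmbOfFin {d k : ℕ} (s : Finset (Fin d)) (h : s.card = k) (r : Fin k) :
    eps (s.orderEmbOfFin h r) s = r + 1 := by
  have himg : s.filter (fun i' => i' ≤ s.orderEmbOfFin h r)
      = (Finset.univ.filter (fun r' : Fin k => r' ≤ r)).image (s.orderEmbOfFin h) := by
    ext a
    simp only [mem_filter, mem_image, mem_univ, true_and]
    constructor
    · rintro ⟨has, hale⟩
      have : a ∈ Set.range (s.orderEmbOfFin h) := by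
        rw [Finset.range_orderEmbOfFin]; exact has
      obtain ⟨r', rfl⟩ := this
      exact ⟨r', (OrderEmbedding.le_iff_le _).mp hale, rfl⟩
    · rintro ⟨r', hr', rfl⟩
      exact ⟨Finset.orderEmbOfFin_mem s h r', (OrderEmbedding.le_iff_le _).mpr hr'⟩
  rw [eps, himg, Finset.card_image_of_injective _ (s.orderEmbOfFin h).injective]
  have : (Finset.univ.filter (fun r' : Fin k => r' ≤ r)) = Finset.Iic r := by
    ext; simp
  rw [this, Fin.card_Iic]

lemma mulVec_eq_sum_cols {d e : ℕ} (B : Matrix (Fin d) (Fin e) ℂ) (c : Fin e → ℂ) :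
    B.mulVec c = ∑ l, c l • (fun i => B i l) := by
  funext i
  simp [mulVec, dotProduct, mul_comm]

lemma mem_colSpan_iff {d e : ℕ} (B : Matrix (Fin d) (Fin e) ℂ) (y : Fin d → ℂ) :
    y ∈ Submodule.span ℂ (Set.range fun l => fun i => B i l) ↔ ∃ c, B.mulVec c = y := by
  rw [Submodule.mem_span_range_iff_exists_fun]
  exact exists_congr fun c => by rw [mulVec_eq_sum_cols]

lemma wvec_eq_mulVec {d e : ℕ} (B : Matrix (Fin d) (Fin e) ℂ) (I : Finset (Fin d))
    (hI : I.card + 1 = e) : ∃ c, B.mulVec c = wvec B I := by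
  subst hI
  have hIcard : I.card = I.card := rfl
  set g : Fin I.card → Fin d := fun r => I.orderEmbOfFin hIcard r with hg
  refine ⟨fun l => (-1 : ℂ) ^ (l : ℕ) * (B.submatrix g l.succAbove).det, ?_⟩
  funext i
  set D : Matrix (Fin (I.card + 1)) (Fin (I.card + 1)) ℂ :=
    Matrix.of (Fin.cons (B i) fun r => B (g r)) with hD
  have hDdet : (B.mulVec fun l => (-1 : ℂ) ^ (l : ℕ) * (B.submatrix g l.succAbove).det) i
      = D.det := by
    rw [Matrix.det_succ_row_zero]
    simp only [mulVec, dotProduct]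
    refine Finset.sum_congr rfl fun l _ => ?_
    have h1 : D 0 l = B i l := rfl
    have h2 : D.submatrix Fin.succ l.succAbove = B.submatrix g l.succAbove := by
      ext r m; simp [hD, submatrix_apply, Fin.cons_succ]
    rw [h1, h2]; ring
  rw [hDdet]
  by_cases hiI : i ∈ I
  · have hins : insert i I = I := Finset.insert_eq_self.mpr hiI
    have hpl : plucker B (insert i I) = 0 := by
      rw [hins, plucker, dif_neg]; omega
    rw [wvec, hpl, mul_zero]
    obtain ⟨r0, hr0⟩ : ∃ r0, g r0 = i := by
      have : i ∈ Set.range (I.orderEmbOfFin hIcard) := by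
        rw [Finset.range_orderEmbOfFin]; exact hiI
      exact this
    refine Matrix.det_zero_of_row_eq (i := 0) (j := r0.succ) (Fin.succ_ne_zero r0).symm ?_
    funext l
    simp [hD, Fin.cons_succ, hr0]
  · have hscard : (insert i I).card = I.card + 1 := by
      rw [Finset.card_insert_of_notMem hiI]
    set s := insert i I with hs
    set emb : Fin (I.card + 1) → Fin d := fun r => s.orderEmbOfFin hscard r with hemb
    obtain ⟨p, hp⟩ : ∃ p, emb p = i := by
      have : i ∈ Set.range (s.orderEmbOfFin hscard) := by
        rw [Finset.range_orderEmbOfFin]; exact Finset.mem_insert_self i I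
      exact this
    have hplS : plucker B s = (B.submatrix emb id).det :=
      plucker_eq_det B hscard (s.orderEmbOfFin hscard).strictMono
        (fun r => Finset.orderEmbOfFin_mem s hscard r)
    have hembSA : ∀ r : Fin I.card, emb (p.succAbove r) = g r := by
      have hmono : StrictMono fun r : Fin I.card => emb (p.succAbove r) :=
        (s.orderEmbOfFin hscard).strictMono.comp (Fin.strictMono_succAbove p)
      have hmem : ∀ r : Fin I.card, emb (p.succAbove r) ∈ I := by
        intro r
        have h1 : emb (p.succAbove r) ∈ s := Finset.orderEmbOfFin_mem s hscard _
        have h2 : emb (p.succAbove r) ≠ i := by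
          rw [← hp]
          exact fun hcontra => Fin.succAbove_ne p r
            ((s.orderEmbOfFin hscard).injective hcontra)
        rw [hs] at h1
        rcases Finset.mem_insert.mp h1 with h | h
        · exact absurd h h2
        · exact h
      have := Finset.orderEmbOfFin_unique hIcard hmem hmono
      intro r; exact congrFun this r
    have hepsi : eps i I = (p : ℕ) := by
      have h1 : eps i s = (p : ℕ) + 1 := by rw [← hp]; exact eps_orderEmbOfFin s hscard p
      have h2 : eps i s = eps i I + 1 := by
        rw [eps, eps, hs, Finset.filter_insert, if_pos le_rfl,
          Finset.card_insert_of_notMem (fun hc => hiI (Finset.mem_filter.mp hc).1)]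
      omega
    have hexp : plucker B s = ∑ l : Fin (I.card + 1), (-1 : ℂ) ^ ((p : ℕ) + (l : ℕ)) * B i l
        * (B.submatrix g l.succAbove).det := by
      rw [hplS, Matrix.det_succ_row _ p]
      refine Finset.sum_congr rfl fun l _ => ?_
      have h1 : (B.submatrix emb id) p l = B i l := by rw [submatrix_apply, hp]; rfl
      have h2 : (B.submatrix emb id).submatrix p.succAbove l.succAbove
          = B.submatrix g l.succAbove := by
        ext r m; simp [submatrix_apply, hembSA r]
      rw [h1, h2]
    simp only [wvec, ← hs]
    rw [hexp, hepsi, hD, Matrix.det_succ_row_zero, Finset.mul_sum]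
    refine Finset.sum_congr rfl fun l _ => ?_
    have h1 : (Matrix.of (Fin.cons (B i) fun r => B (g r))) 0 l = B i l := rfl
    have h2 : (Matrix.of (Fin.cons (B i) fun r => B (g r))).submatrix Fin.succ l.succAbove
        = B.submatrix g l.succAbove := by
      ext r m; simp [submatrix_apply, Fin.cons_succ]
    rw [h1, h2]
    have hsgn : (-1 : ℂ) ^ ((p : ℕ)) * (-1 : ℂ) ^ ((p : ℕ) + (l : ℕ)) = (-1 : ℂ) ^ (l : ℕ) := by
      rw [← pow_add, show (p : ℕ) + ((p : ℕ) + (l : ℕ)) = 2 * (p : ℕ) + (l : ℕ) by ring,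
        pow_add, pow_mul]
      norm_num
    rw [← mul_assoc, ← mul_assoc, hsgn]

lemma sum_orderEmbOfFin {d k : ℕ} (J : Finset (Fin d)) (h : J.card = k) (F : Fin d → ℂ) :
    ∑ j ∈ J, F j = ∑ r : Fin k, F (J.orderEmbOfFin h r) := by
  have himg : Finset.image (fun r => J.orderEmbOfFin h r) Finset.univ = J := by
    ext a
    simp only [Finset.mem_image, Finset.mem_univ, true_and]
    constructor
    · rintro ⟨r, rfl⟩; exact Finset.orderEmbOfFin_mem J h r
    · intro ha
      have : a ∈ Set.range (J.orderEmbOfFin h) := by rw [Finset.range_orderEmbOfFin]; exact ha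
      exact this
  have h2 := Finset.sum_image (s := Finset.univ) (g := fun r => J.orderEmbOfFin h r) (f := F)
    (fun r _ r' _ hrr => (J.orderEmbOfFin h).injective hrr)
  rw [himg] at h2
  simpa using h2

lemma brel_eq_zero {d e : ℕ} (B : Matrix (Fin d) (Fin e) ℂ) (c : Fin e → ℂ)
    (J : Finset (Fin d)) (hJ : J.card = e + 1) : brel B (B.mulVec c) J = 0 := by
  set y := B.mulVec c with hy
  set emb : Fin (e + 1) → Fin d := fun r => J.orderEmbOfFin hJ r with hemb
  set M : Matrix (Fin (e + 1)) (Fin (e + 1)) ℂ :=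
    Matrix.of (fun r => Fin.snoc (fun l => B (emb r) l) (y (emb r))) with hM
  have hMdet : M.det = 0 := by
    rw [← Matrix.exists_mulVec_eq_zero_iff]
    refine ⟨Fin.snoc c (-1), ?_, ?_⟩
    · intro hc
      have := congrFun hc (Fin.last e)
      rw [Fin.snoc_last] at this
      exact (by norm_num : (-1 : ℂ) ≠ 0) this
    · funext r
      simp only [Matrix.mulVec, dotProduct, Pi.zero_apply]
      rw [Fin.sum_univ_castSucc]
      simp only [hM, Matrix.of_apply, Fin.snoc_castSucc, Fin.snoc_last, hy,
        Matrix.mulVec, dotProduct]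
      ring
  have hsub : ∀ r : Fin (e + 1),
      (M.submatrix r.succAbove (Fin.last e).succAbove).det
        = plucker B (J.erase (emb r)) := by
    intro r
    have hcard : (J.erase (emb r)).card = e := by
      rw [Finset.card_erase_of_mem (Finset.orderEmbOfFin_mem J hJ r), hJ]
      omega
    have hmono : StrictMono fun r' : Fin e => emb (r.succAbove r') :=
      (J.orderEmbOfFin hJ).strictMono.comp (Fin.strictMono_succAbove r)
    have hmem : ∀ r' : Fin e, emb (r.succAbove r') ∈ J.erase (emb r) := by
      intro r'
      refine Finset.mem_erase.mpr ⟨?_, Finset.orderEmbOfFin_mem J hJ _⟩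
      exact fun hcontra => Fin.succAbove_ne r r' ((J.orderEmbOfFin hJ).injective hcontra)
    rw [plucker_eq_det B hcard hmono hmem]
    congr 1
    ext r' l
    simp [hM, Fin.succAbove_last, Fin.snoc_castSucc]
  have hexp : M.det = ∑ r : Fin (e + 1),
      (-1 : ℂ) ^ ((r : ℕ) + e) * y (emb r) * plucker B (J.erase (emb r)) := by
    rw [Matrix.det_succ_column M (Fin.last e)]
    refine Finset.sum_congr rfl fun r _ => ?_
    rw [hsub r]
    have h1 : M r (Fin.last e) = y (emb r) := by simp [hM]
    rw [h1, Fin.val_last]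
  have hbrel : brel B y J = ∑ r : Fin (e + 1),
      (-1 : ℂ) ^ ((r : ℕ) + 1) * y (emb r) * plucker B (J.erase (emb r)) := by
    rw [brel, sum_orderEmbOfFin J hJ]
    refine Finset.sum_congr rfl fun r _ => ?_
    rw [eps_orderEmbOfFin J hJ r]
  rw [hbrel]
  have : ∀ r : Fin (e + 1), (-1 : ℂ) ^ ((r : ℕ) + 1) * y (emb r) * plucker B (J.erase (emb r))
      = (-1 : ℂ) ^ (e + 1) * ((-1 : ℂ) ^ ((r : ℕ) + e) * y (emb r)
        * plucker B (J.erase (emb r))) := by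
    intro r
    have : (-1 : ℂ) ^ (e + 1) * (-1 : ℂ) ^ ((r : ℕ) + e)
        = (-1 : ℂ) ^ ((r : ℕ) + 1) := by
      rw [← pow_add, show e + 1 + ((r : ℕ) + e) = 2 * e + ((r : ℕ) + 1) by ring,
        pow_add, pow_mul]
      norm_num
    rw [← this]; ring
  rw [Finset.sum_congr rfl fun r _ => this r, ← Finset.mul_sum, ← hexp, hMdet, mul_zero]

lemma exists_plucker_ne_zero {d e : ℕ} {B : Matrix (Fin d) (Fin e) ℂ}
    (h : LinearIndependent ℂ (fun l => fun i => B i l)) :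
    ∃ K : Finset (Fin d), K.card = e ∧ plucker B K ≠ 0 := by
  classical
  -- the rows of `B` span `ℂ^e`
  have hinj : Function.Injective B.mulVecLin := by
    rw [Matrix.coe_mulVecLin]
    rw [Matrix.mulVec_injective_iff]
    exact h
  have hrank : B.rank = e := by
    rw [Matrix.rank, LinearMap.finrank_range_of_inj hinj]
    simp
  have hrows : Submodule.span ℂ (Set.range fun i => B i) = ⊤ := by
    have h1 : LinearMap.range Bᵀ.mulVecLin = Submodule.span ℂ (Set.range fun i => B i) := by
      exact Matrix.range_mulVecLin _
    have h2 : Module.finrank ℂ (LinearMap.range Bᵀ.mulVecLin) = e := by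
      have := Matrix.rank_transpose B
      rw [hrank] at this
      exact this
    rw [h1] at h2
    exact Submodule.eq_top_of_finrank_eq (by simpa using h2)
  -- extract a basis from the rows
  obtain ⟨b, hbsub, hbspan, hbli⟩ := exists_linearIndependent ℂ (Set.range fun i => B i)
  rw [hrows] at hbspan
  have hbfin : b.Finite := Set.Finite.subset (Set.finite_range _) hbsub
  have : Fintype b := hbfin.fintype
  have hbasis : Module.Basis b ℂ (Fin e → ℂ) := Module.Basis.mk hbli (by rw [Subtype.range_coe, hbspan])
  have hcardb : Fintype.card b = e := by
    have := Module.finrank_eq_card_basis hbasis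
    simpa using this.symm
  let σ : Fin e ≃ b := (Fintype.equivFinOfCardEq hcardb).symm
  have hchoice : ∀ r : Fin e, ∃ i : Fin d, B i = (σ r : Fin e → ℂ) := by
    intro r
    exact hbsub (σ r).2
  choose g hgval using hchoice
  have hginj : Function.Injective g := by
    intro r1 r2 hr
    have : (σ r1 : Fin e → ℂ) = (σ r2 : Fin e → ℂ) := by rw [← hgval, ← hgval, hr]
    exact σ.injective (Subtype.ext this)
  have hgli : LinearIndependent ℂ (fun r : Fin e => B (g r)) := by
    have : (fun r : Fin e => B (g r)) = (fun x : b => (x : Fin e → ℂ)) ∘ σ := by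
      funext r; rw [hgval]; rfl
    rw [this]
    exact hbli.comp σ σ.injective
  have hdetg : (B.submatrix g id).det ≠ 0 := by
    have hrowsg : LinearIndependent ℂ (fun r => (B.submatrix g id) r) := by
      have : (fun r => (B.submatrix g id) r) = fun r : Fin e => B (g r) := by
        funext r; rfl
      rw [this]; exact hgli
    have := Matrix.linearIndependent_rows_iff_isUnit.mp hrowsg
    rw [Matrix.isUnit_iff_isUnit_det] at this
    exact this.ne_zero
  refine ⟨Finset.univ.image g, ?_, ?_⟩
  · rw [Finset.card_image_of_injective _ hginj, Finset.card_univ, Fintype.card_fin]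
  · set K := Finset.univ.image g with hK
    have hKcard : K.card = e := by
      rw [hK, Finset.card_image_of_injective _ hginj, Finset.card_univ, Fintype.card_fin]
    have hpl : plucker B K = (B.submatrix (fun r => K.orderEmbOfFin hKcard r) id).det :=
      plucker_eq_det B hKcard (K.orderEmbOfFin hKcard).strictMono
        (fun r => Finset.orderEmbOfFin_mem K hKcard r)
    -- relate to the determinant at `g` by a permutation of rows
    have hgK : ∀ r : Fin e, g r ∈ K := fun r => Finset.mem_image_of_mem g (Finset.mem_univ r)
    let τ : Fin e → Fin e := fun r => (K.orderIsoOfFin hKcard).symm ⟨g r, hgK r⟩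
    have hτval : ∀ r, (K.orderEmbOfFin hKcard) (τ r) = g r := by
      intro r
      show ((K.orderIsoOfFin hKcard) (τ r) : Fin d) = g r
      rw [OrderIso.apply_symm_apply]
    have hτinj : Function.Injective τ := by
      intro r1 r2 hr
      apply hginj
      rw [← hτval r1, ← hτval r2, hr]
    have hτbij : Function.Bijective τ := (Finite.injective_iff_bijective).mp hτinj
    let π : Equiv.Perm (Fin e) := Equiv.ofBijective τ hτbij
    have hsubeq : B.submatrix g id
        = (B.submatrix (fun r => K.orderEmbOfFin hKcard r) id).submatrix π id := by
      ext r l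
      simp only [submatrix_apply, id_eq]
      rw [show π r = τ r from rfl, hτval]
    intro hzero
    rw [hpl] at hzero
    rw [hsubeq, Matrix.det_permute, hzero, mul_zero] at hdetg
    exact hdetg rfl

lemma brel_eq_zero_of_mem {d e : ℕ} {B : Matrix (Fin d) (Fin e) ℂ}
    {N : Submodule ℂ (Fin d → ℂ)} (hB : IsColBasis B N) {y : Fin d → ℂ} (hy : y ∈ N)
    (J : Finset (Fin d)) (hJ : J.card = e + 1) : brel B y J = 0 := by
  rw [← hB.2] at hy
  obtain ⟨c, rfl⟩ := (mem_colSpan_iff B y).mp hy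
  exact brel_eq_zero B c J hJ

lemma mem_of_brel_eq_zero {d e : ℕ} {B : Matrix (Fin d) (Fin e) ℂ}
    {N : Submodule ℂ (Fin d → ℂ)} (hB : IsColBasis B N) (y : Fin d → ℂ)
    (hy : ∀ J : Finset (Fin d), J.card = e + 1 → brel B y J = 0) : y ∈ N := by
  classical
  obtain ⟨K, hKcard, hKpl⟩ := exists_plucker_ne_zero hB.1
  set emb : Fin e → Fin d := fun r => K.orderEmbOfFin hKcard r with hemb
  set R : Matrix (Fin e) (Fin e) ℂ := B.submatrix emb id with hR
  have hRdet : R.det ≠ 0 := by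
    rw [← plucker_eq_det B hKcard (K.orderEmbOfFin hKcard).strictMono
      (fun r => Finset.orderEmbOfFin_mem K hKcard r)]
    exact hKpl
  set c : Fin e → ℂ := R⁻¹.mulVec (fun r => y (emb r)) with hc
  set z : Fin d → ℂ := B.mulVec c with hz
  have hzmem : z ∈ N := by
    rw [← hB.2]; exact (mem_colSpan_iff B z).mpr ⟨c, rfl⟩
  have hzK : ∀ j ∈ K, z j = y j := by
    intro j hj
    obtain ⟨r, rfl⟩ : ∃ r, emb r = j := by
      have : j ∈ Set.range (K.orderEmbOfFin hKcard) := by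
        rw [Finset.range_orderEmbOfFin]; exact hj
      exact this
    have h1 : z (emb r) = (R.mulVec c) r := by
      simp [hz, hR, mulVec, dotProduct]
    rw [h1, hc, Matrix.mulVec_mulVec, Matrix.mul_nonsing_inv R (isUnit_iff_ne_zero.mpr hRdet),
      Matrix.one_mulVec]
  have hyz : y = z := by
    funext j0
    by_cases hj0 : j0 ∈ K
    · exact (hzK j0 hj0).symm
    · set J := insert j0 K with hJ
      have hJcard : J.card = e + 1 := by
        rw [hJ, Finset.card_insert_of_notMem hj0, hKcard]
      have h1 : brel B y J = 0 := hy J hJcard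
      have h2 : brel B z J = 0 := by rw [hz]; exact brel_eq_zero B c J hJcard
      have hdiff : ∑ j ∈ J, (-1 : ℂ) ^ (eps j J) * (y j - z j) * plucker B (J.erase j) = 0 := by
        have : ∑ j ∈ J, (-1 : ℂ) ^ (eps j J) * (y j - z j) * plucker B (J.erase j)
            = brel B y J - brel B z J := by
          rw [brel, brel, ← Finset.sum_sub_distrib]
          exact Finset.sum_congr rfl fun j _ => by ring
        rw [this, h1, h2, sub_zero]
      rw [Finset.sum_insert hj0] at hdiff
      have hzero : ∀ j ∈ K, (-1 : ℂ) ^ (eps j J) * (y j - z j) * plucker B (J.erase j) = 0 := by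
        intro j hj
        rw [hzK j hj]
        ring
      rw [Finset.sum_eq_zero hzero, add_zero, Finset.erase_insert hj0] at hdiff
      have hne : (-1 : ℂ) ^ (eps j0 J) * plucker B K ≠ 0 :=
        mul_ne_zero (pow_ne_zero _ (by norm_num)) hKpl
      have h3 : y j0 - z j0 = 0 := by
        by_contra hcon
        exact (mul_ne_zero (mul_ne_zero (pow_ne_zero _ (show (-1:ℂ) ≠ 0 by norm_num)) hcon)
          hKpl) hdiff
      exact sub_eq_zero.mp h3
  rw [hyz]; exact hzmem

lemma le_span_wvec {d e : ℕ} {B : Matrix (Fin d) (Fin e) ℂ} {N : Submodule ℂ (Fin d → ℂ)}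
    (hB : IsColBasis B N) :
    N ≤ Submodule.span ℂ {x | ∃ I : Finset (Fin d), I.card + 1 = e ∧ x = wvec B I} := by
  classical
  obtain ⟨K, hKcard, hKpl⟩ := exists_plucker_ne_zero hB.1
  set S : Set (Fin d → ℂ) := {x | ∃ I : Finset (Fin d), I.card + 1 = e ∧ x = wvec B I} with hS
  intro x hx
  have hSsub : ∀ k ∈ K, wvec B (K.erase k) ∈ S := by
    intro k hk
    refine ⟨K.erase k, ?_, rfl⟩
    rw [Finset.card_erase_of_mem hk, hKcard]
    have : 1 ≤ e := by
      rw [← hKcard]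
      exact Finset.card_pos.mpr ⟨k, hk⟩
    omega
  set a : Fin d → ℂ := fun k => ((-1 : ℂ) ^ (eps k (K.erase k)) * plucker B K)⁻¹ * x k with ha
  set y : Fin d → ℂ := ∑ k ∈ K, a k • wvec B (K.erase k) with hy
  have hymem : y ∈ Submodule.span ℂ S :=
    Submodule.sum_mem _ fun k hk =>
      Submodule.smul_mem _ _ (Submodule.subset_span (hSsub k hk))
  -- the vectors agree on `K`
  have hwv : ∀ k ∈ K, ∀ j ∈ K, wvec B (K.erase k) j = if j = k
      then (-1 : ℂ) ^ (eps k (K.erase k)) * plucker B K else 0 := by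
    intro k hk j hj
    by_cases hjk : j = k
    · subst hjk
      rw [if_pos rfl, wvec, Finset.insert_erase hj]
    · rw [if_neg hjk, wvec]
      have h1 : insert j (K.erase k) = K.erase k :=
        Finset.insert_eq_self.mpr (Finset.mem_erase.mpr ⟨hjk, hj⟩)
      have h2 : plucker B (insert j (K.erase k)) = 0 := by
        rw [h1, plucker, dif_neg]
        rw [Finset.card_erase_of_mem hk, hKcard]
        have : 1 ≤ e := by
          rw [← hKcard]; exact Finset.card_pos.mpr ⟨k, hk⟩
        omega
      rw [h2, mul_zero]
  have hyK : ∀ j ∈ K, y j = x j := by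
    intro j hj
    have h1 : y j = ∑ k ∈ K, a k * wvec B (K.erase k) j := by
      rw [hy]
      simp [Finset.sum_apply]
    rw [h1, Finset.sum_eq_single j
      (fun k hk hkj => by rw [hwv k hk j hj, if_neg (fun hc => hkj hc.symm), mul_zero])
      (fun hc => absurd hj hc)]
    rw [hwv j hj j hj, if_pos rfl, ha]
    have hne : (-1 : ℂ) ^ (eps j (K.erase j)) * plucker B K ≠ 0 :=
      mul_ne_zero (pow_ne_zero _ (by norm_num)) hKpl
    field_simp
  -- x - y is in N and vanishes on K, hence is zero
  have hwmem : ∀ k ∈ K, wvec B (K.erase k) ∈ N := by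
    intro k hk
    obtain ⟨I, hI, hxw⟩ := hSsub k hk
    obtain ⟨c, hc⟩ := wvec_eq_mulVec B I hI
    rw [hxw, ← hB.2]
    exact (mem_colSpan_iff B _).mpr ⟨c, hc⟩
  have hymemN : y ∈ N :=
    Submodule.sum_mem _ fun k hk => Submodule.smul_mem _ _ (hwmem k hk)
  have hdiffN : x - y ∈ N := Submodule.sub_mem _ hx hymemN
  rw [← hB.2] at hdiffN
  obtain ⟨t, ht⟩ := (mem_colSpan_iff B _).mp hdiffN
  set emb : Fin e → Fin d := fun r => K.orderEmbOfFin hKcard r with hemb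
  set R : Matrix (Fin e) (Fin e) ℂ := B.submatrix emb id with hR
  have hRdet : R.det ≠ 0 := by
    rw [← plucker_eq_det B hKcard (K.orderEmbOfFin hKcard).strictMono
      (fun r => Finset.orderEmbOfFin_mem K hKcard r)]
    exact hKpl
  have hRt : R.mulVec t = 0 := by
    funext r
    have h1 : (R.mulVec t) r = (B.mulVec t) (emb r) := by
      simp [hR, mulVec, dotProduct]
    rw [h1, ht]
    have := hyK (emb r) (Finset.orderEmbOfFin_mem K hKcard r)
    simp [Pi.sub_apply, this]
  have ht0 : t = 0 := by
    by_contra hcon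
    exact hRdet (Matrix.exists_mulVec_eq_zero_iff.mp ⟨t, hcon, hRt⟩)
  have : x - y = 0 := by rw [← ht, ht0, Matrix.mulVec_zero]
  have hxy : x = y := by
    have := sub_eq_zero.mp this
    exact this
  rw [hxy]
  exact hymem

lemma qpr_eq_brel {dp dq ep eq : ℕ} (A : Matrix (Fin dq) (Fin dp) ℂ)
    (Bp : Matrix (Fin dp) (Fin ep) ℂ) (Bq : Matrix (Fin dq) (Fin eq) ℂ)
    (I : Finset (Fin dp)) (hI : I.card + 1 = ep) (J : Finset (Fin dq)) :
    qpr A Bp Bq I J = brel Bq (A.mulVec (wvec Bp I)) J := by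
  classical
  have hw0 : ∀ i ∈ I, wvec Bp I i = 0 := by
    intro i hi
    rw [wvec, Finset.insert_eq_self.mpr hi, plucker, dif_neg (by omega), mul_zero]
  have hmv : ∀ j, (A.mulVec (wvec Bp I)) j
      = ∑ i ∈ Iᶜ, A j i * ((-1 : ℂ) ^ (eps i I) * plucker Bp (insert i I)) := by
    intro j
    have h2 : ∑ i ∈ I, A j i * wvec Bp I i = 0 :=
      Finset.sum_eq_zero fun i hi => by rw [hw0 i hi, mul_zero]
    rw [mulVec, dotProduct, ← Finset.sum_compl_add_sum I (fun i => A j i * wvec Bp I i), h2,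
      add_zero]
    exact Finset.sum_congr rfl fun i _ => rfl
  rw [qpr, brel, Finset.sum_comm]
  refine Finset.sum_congr rfl fun j _ => ?_
  rw [hmv j, Finset.mul_sum, Finset.sum_mul]
  refine Finset.sum_congr rfl fun i _ => ?_
  rw [pow_add]
  ring

theorem stmt15 {Q₀ Q₁ : Type} [Fintype Q₀] [Fintype Q₁]
    (src tgt : Q₁ → Q₀) (d : Q₀ → ℕ)
    (A : ∀ v : Q₁, Matrix (Fin (d (tgt v))) (Fin (d (src v))) ℂ)
    (e : Q₀ → ℕ)
    (N : ∀ p : Q₀, Submodule ℂ (Fin (d p) → ℂ))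
    (B : ∀ p : Q₀, Matrix (Fin (d p)) (Fin (e p)) ℂ)
    (hB : ∀ p : Q₀, IsColBasis (B p) (N p)) :
    (∀ v : Q₁, ∀ x ∈ N (src v), (A v).mulVec x ∈ N (tgt v)) ↔
      (∀ v : Q₁, ∀ I : Finset (Fin (d (src v))), I.card + 1 = e (src v) →
        ∀ J : Finset (Fin (d (tgt v))), J.card = e (tgt v) + 1 →
          qpr (A v) (B (src v)) (B (tgt v)) I J = 0) := by
  constructor
  · intro hsub v I hI J hJ
    have hwmem : wvec (B (src v)) I ∈ N (src v) := by
      obtain ⟨c, hc⟩ := wvec_eq_mulVec (B (src v)) I hI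
      rw [← (hB (src v)).2]
      exact (mem_colSpan_iff _ _).mpr ⟨c, hc⟩
    have hAw : (A v).mulVec (wvec (B (src v)) I) ∈ N (tgt v) :=
      hsub v _ hwmem
    rw [qpr_eq_brel (A v) (B (src v)) (B (tgt v)) I hI J]
    exact brel_eq_zero_of_mem (hB (tgt v)) hAw J hJ
  · intro hq v x hx
    have hspan := le_span_wvec (hB (src v)) hx
    have hcomap : Submodule.span ℂ
        {w | ∃ I : Finset (Fin (d (src v))), I.card + 1 = e (src v) ∧ w = wvec (B (src v)) I}
        ≤ (N (tgt v)).comap (A v).mulVecLin := by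
      rw [Submodule.span_le]
      rintro w ⟨I, hI, rfl⟩
      rw [SetLike.mem_coe, Submodule.mem_comap, Matrix.mulVecLin_apply]
      apply mem_of_brel_eq_zero (hB (tgt v))
      intro J hJ
      rw [← qpr_eq_brel (A v) (B (src v)) (B (tgt v)) I hI J]
      exact hq v I hI J hJ
    have hmem := hcomap hspan
    rw [Submodule.mem_comap, Matrix.mulVecLin_apply] at hmem
    exact hmem
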